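/- arXiv:1105.1683 — 2 statements merged into one kernel-verified Lean document; each statement's English description precedes it below -/
import Mathlib

section
/- Let G = (V,E) be a finite simple graph, p ∈ [0,1]^V in the Shearer set of G, W ⊆ V and v ∈ V ∖ W with Ξ_{G[W]}(p) > 0. If the pair (W,v) is escaping, i.e. there exists w ∈ N(v) ∖ W, then for every such escape w one has q_w ≤ Θ_{W,v}(p) := Ξ_{G[W∪{v}]}(p) / Ξ_{G[W]}(p), where q_w := 1 − p_w. -/
open MeasureTheory Finset
open scoped Classical

/-- The critical function Ξ_{G[W]}(p). -/
noncomputable def Xi {V : Type*} (G : SimpleGraph V) (W : Finset V) (p : V → ℝ) : ℝ :=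
  ∑ T ∈ W.powerset,
    if ∀ u ∈ T, ∀ w ∈ T, ¬ G.Adj u w then ∏ v ∈ T, -(1 - p v) else 0

lemma Xi_insert {V : Type*} [DecidableEq V] (G : SimpleGraph V) (p : V → ℝ)
    (S : Finset V) (u : V) (hu : u ∉ S) :
    Xi G (insert u S) p
      = Xi G S p - (1 - p u) * Xi G (S.filter (fun x => ¬ G.Adj u x)) p := by
  classical
  unfold Xi
  rw [Finset.sum_powerset_insert hu]
  have key : ∑ T ∈ S.powerset,
      (if ∀ a ∈ insert u T, ∀ b ∈ insert u T, ¬ G.Adj a b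
        then ∏ x ∈ insert u T, -(1 - p x) else 0)
      = -((1 - p u) * ∑ T ∈ (S.filter (fun x => ¬ G.Adj u x)).powerset,
          (if ∀ a ∈ T, ∀ b ∈ T, ¬ G.Adj a b then ∏ x ∈ T, -(1 - p x) else 0)) := by
    have h1 : ∀ T ∈ S.powerset,
        (if ∀ a ∈ insert u T, ∀ b ∈ insert u T, ¬ G.Adj a b
          then ∏ x ∈ insert u T, -(1 - p x) else 0)
        = -((1 - p u) * (if (∀ a ∈ T, ∀ b ∈ T, ¬ G.Adj a b) ∧ (∀ x ∈ T, ¬ G.Adj u x)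
            then ∏ x ∈ T, -(1 - p x) else 0)) := by
      intro T hT
      rw [Finset.mem_powerset] at hT
      have huT : u ∉ T := fun h => hu (hT h)
      have hiff : (∀ a ∈ insert u T, ∀ b ∈ insert u T, ¬ G.Adj a b)
          ↔ ((∀ a ∈ T, ∀ b ∈ T, ¬ G.Adj a b) ∧ (∀ x ∈ T, ¬ G.Adj u x)) := by
        constructor
        · intro h
          refine ⟨fun a ha b hb => h a (Finset.mem_insert_of_mem ha) b
            (Finset.mem_insert_of_mem hb), fun x hx =>
            h u (Finset.mem_insert_self _ _) x (Finset.mem_insert_of_mem hx)⟩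
        · rintro ⟨hind, h2⟩ a ha b hb
          rcases Finset.mem_insert.mp ha with ha' | ha' <;>
            rcases Finset.mem_insert.mp hb with hb' | hb'
          · subst ha'; subst hb'; exact G.irrefl
          · subst ha'; exact h2 b hb'
          · subst hb'; exact fun hab => h2 a ha' (G.adj_symm hab)
          · exact hind a ha' b hb'
      rw [if_congr hiff rfl rfl, Finset.prod_insert huT]
      by_cases hc : (∀ a ∈ T, ∀ b ∈ T, ¬ G.Adj a b) ∧ (∀ x ∈ T, ¬ G.Adj u x)
      · rw [if_pos hc, if_pos hc]; ring
      · rw [if_neg hc, if_neg hc]; ring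
    rw [Finset.sum_congr rfl h1, Finset.sum_neg_distrib, neg_inj, ← Finset.mul_sum]
    congr 1
    -- restrict the sum to subsets of the filtered set
    refine (Finset.sum_subset (Finset.powerset_mono.mpr (Finset.filter_subset _ _)) ?_).symm.trans
      (Finset.sum_congr rfl ?_)
    · intro T hT hT'
      rw [Finset.mem_powerset] at hT hT'
      rw [if_neg]
      rintro ⟨-, h2⟩
      apply hT'
      intro x hx
      exact Finset.mem_filter.mpr ⟨hT hx, h2 x hx⟩
    · intro T hT
      rw [Finset.mem_powerset] at hT
      have : ∀ x ∈ T, ¬ G.Adj u x := fun x hx => (Finset.mem_filter.mp (hT hx)).2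
      by_cases hc : ∀ a ∈ T, ∀ b ∈ T, ¬ G.Adj a b
      · rw [if_pos hc, if_pos ⟨hc, this⟩]
      · rw [if_neg hc, if_neg (fun h => hc h.1)]
  rw [key]; ring

lemma Xi_anti {V : Type*} [DecidableEq V] (G : SimpleGraph V) (p : V → ℝ)
    (hp : ∀ v, p v ∈ Set.Icc (0:ℝ) 1)
    (hShearer : ∀ W : Finset V, 0 ≤ Xi G W p) :
    ∀ B : Finset V, ∀ A ⊆ B, Xi G B p ≤ Xi G A p := by
  classical
  intro B
  induction B using Finset.strongInduction with
  | _ B ih =>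
    intro A hAB
    rcases eq_or_ssubset_of_subset hAB with rfl | hss
    · exact le_refl _
    · obtain ⟨u, huB, huA⟩ := Finset.exists_of_ssubset hss
      have hBe : insert u (B.erase u) = B := Finset.insert_erase huB
      have hq : 0 ≤ 1 - p u := by have := (hp u).2; linarith
      have hstep : Xi G B p ≤ Xi G (B.erase u) p := by
        have hx := Xi_insert G p (B.erase u) u (Finset.notMem_erase u B)
        rw [hBe] at hx
        have h0 := hShearer ((B.erase u).filter (fun x => ¬ G.Adj u x))
        nlinarith
      exact hstep.trans (ih (B.erase u) (Finset.erase_ssubset huB) A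
        (fun x hx => Finset.mem_erase.mpr ⟨fun h => huA (h ▸ hx), hAB hx⟩))

/-- escaping one-vertex open extension probabilities are at
least q_w for every escape w. -/
theorem stmt12 {V : Type*} [Fintype V] [DecidableEq V] (G : SimpleGraph V)
    (p : V → ℝ) (hp : ∀ v, p v ∈ Set.Icc (0:ℝ) 1)
    (hShearer : ∀ W : Finset V, 0 ≤ Xi G W p)
    (W : Finset V) (v : V) (hv : v ∉ W) (hW : 0 < Xi G W p)
    (w : V) (hadj : G.Adj v w) (hwW : w ∉ W) :
    1 - p w ≤ Xi G (insert v W) p / Xi G W p := by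
  classical
  have hwv : w ≠ v := fun h => G.irrefl (h ▸ hadj)
  have hwS : w ∉ insert v W := by
    simp [hwv, hwW]
  have hid := Xi_insert G p (insert v W) w hwS
  set S' := (insert v W).filter (fun x => ¬ G.Adj w x) with hS'
  have hS'W : S' ⊆ W := by
    intro x hx
    rw [hS', Finset.mem_filter] at hx
    rcases Finset.mem_insert.mp hx.1 with rfl | h
    · exact absurd (G.adj_symm hadj) hx.2
    · exact h
  have hq : 0 ≤ 1 - p w := by have := (hp w).2; linarith
  have hmono : Xi G W p ≤ Xi G S' p := Xi_anti G p hp hShearer W S' hS'W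
  have hpos := hShearer (insert w (insert v W))
  rw [le_div_iff₀ hW]
  nlinarith
end

section
/- Let G = (V,E) be a finite simple graph and let p ∈ [0,1]^V lie in the interior Shearer set of G, i.e. Ξ_{G[W]}(p) > 0 for every W ⊆ V. Set c := 1 − (1 − Ξ_G(p))^{1/|V|}. Then c > 0 and every BRF Y in the weak dependency class C_w^G(p) stochastically dominates the homogeneous Bernoulli product field π_{c·1}, i.e. Y ⪰ π_{c·1}. -/
open MeasureTheory Finset
open scoped Classical

/-- Cylinder event. -/
def cylEvt {V : Type*} (S : Finset V) (s : V → Bool) : Set (V → Bool) :=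
  {ω | ∀ v ∈ S, ω v = s v}

def WeakDep {V : Type*} (G : SimpleGraph V) (p : V → ℝ)
    (μ : Measure (V → Bool)) : Prop :=
  IsProbabilityMeasure μ ∧
  ∀ (v : V) (S : Finset V), (∀ w ∈ S, w ≠ v ∧ ¬ G.Adj v w) →
    ∀ s : V → Bool, 0 < (μ (cylEvt S s)).toReal →
      p v ≤ (μ ({ω | ω v = true} ∩ cylEvt S s)).toReal / (μ (cylEvt S s)).toReal

def StrongDep {V : Type*} (G : SimpleGraph V) (p : V → ℝ)
    (μ : Measure (V → Bool)) : Prop :=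
  IsProbabilityMeasure μ ∧
  (∀ v : V, (μ {ω | ω v = true}).toReal = p v) ∧
  ∀ (S₁ S₂ : Finset V), (∀ u ∈ S₁, ∀ w ∈ S₂, u ≠ w ∧ ¬ G.Adj u w) →
    ∀ s₁ s₂ : V → Bool,
      μ (cylEvt S₁ s₁ ∩ cylEvt S₂ s₂) = μ (cylEvt S₁ s₁) * μ (cylEvt S₂ s₂)

/-- Expectation of f under product field π_c restricted to W. -/
noncomputable def prodExp {V : Type*} (c : V → ℝ) (W : Finset V)
    (f : (W → Bool) → ℝ) : ℝ :=
  ∑ s : W → Bool, (∏ v : W, if s v then c v.1 else 1 - c v.1) * f s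

/-- μ stochastically dominates the Bernoulli product field π_c. -/
def DomProd {V : Type*} (μ : Measure (V → Bool)) (c : V → ℝ) : Prop :=
  ∀ (W : Finset V) (f : (W → Bool) → ℝ), Monotone f →
    prodExp c W f ≤ ∫ ω, f (fun v => ω v.1) ∂μ

/-- ν is the Bernoulli product field π_c. -/
def IsProduct {V : Type*} (c : V → ℝ) (μ : Measure (V → Bool)) : Prop :=
  IsProbabilityMeasure μ ∧
  ∀ (S : Finset V) (s : V → Bool),
    μ (cylEvt S s) = ∏ v ∈ S, ENNReal.ofReal (if s v then c v else 1 - c v)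

/-- μ is Shearer's measure μ_{G,p}. -/
def IsShearer {V : Type*} [Fintype V] (G : SimpleGraph V) (p : V → ℝ)
    (μ : Measure (V → Bool)) : Prop :=
  IsProbabilityMeasure μ ∧
  ∀ W : Finset V,
    (μ {ω | ∀ v, (ω v = false ↔ v ∈ W)}).toReal =
      ∑ T ∈ (Finset.univ : Finset V).powerset,
        if W ⊆ T ∧ ∀ u ∈ T, ∀ w ∈ T, ¬ G.Adj u w
        then (-1 : ℝ) ^ (T.card - W.card) * ∏ v ∈ T, (1 - p v) else 0


section AuxLemmas
variable {V : Type*} (G : SimpleGraph V) (p : V → ℝ)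


lemma Xi_empty : Xi G ∅ p = 1 := by
  simp [Xi]

lemma Xi_insert_s14 {v : V} {A : Finset V} (hv : v ∉ A) :
    Xi G (insert v A) p
      = Xi G A p - (1 - p v) * Xi G (A.filter fun w => ¬ G.Adj v w) p := by
  classical
  rw [Xi, Finset.sum_powerset_insert hv]
  have h2 : ∑ T ∈ A.powerset,
      (if ∀ u ∈ insert v T, ∀ w ∈ insert v T, ¬ G.Adj u w then ∏ u ∈ insert v T, -(1 - p u) else 0)
      = -(1 - p v) * Xi G (A.filter fun w => ¬ G.Adj v w) p := by
    have key : ∀ T ∈ A.powerset,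
        (if ∀ u ∈ insert v T, ∀ w ∈ insert v T, ¬ G.Adj u w then ∏ u ∈ insert v T, -(1 - p u) else 0)
        = -(1 - p v) *
          (if (∀ u ∈ T, ∀ w ∈ T, ¬ G.Adj u w) ∧ T ⊆ A.filter (fun w => ¬ G.Adj v w) then
            ∏ u ∈ T, -(1 - p u) else 0) := by
      intro T hT
      rw [Finset.mem_powerset] at hT
      have hvT : v ∉ T := fun h => hv (hT h)
      by_cases hind : ∀ u ∈ insert v T, ∀ w ∈ insert v T, ¬ G.Adj u w
      · rw [if_pos hind, if_pos, Finset.prod_insert hvT]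
        constructor
        · intro u hu w hw; exact hind u (Finset.mem_insert_of_mem hu) w (Finset.mem_insert_of_mem hw)
        · intro w hw
          exact Finset.mem_filter.2 ⟨hT hw, hind v (Finset.mem_insert_self _ _) w (Finset.mem_insert_of_mem hw)⟩
      · rw [if_neg hind, if_neg, mul_zero]
        rintro ⟨h1, h2⟩
        apply hind
        intro u hu w hw
        rcases Finset.mem_insert.1 hu with h | huT
        · rcases Finset.mem_insert.1 hw with h' | hwT
          · rw [h, h']; exact G.irrefl
          · rw [h]; exact (Finset.mem_filter.1 (h2 hwT)).2
        · rcases Finset.mem_insert.1 hw with h' | hwT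
          · rw [h']; exact fun had => (Finset.mem_filter.1 (h2 huT)).2 had.symm
          · exact h1 u huT w hwT
    rw [Finset.sum_congr rfl key, ← Finset.mul_sum]
    congr 1
    rw [Xi]
    refine (Finset.sum_subset (Finset.powerset_mono.2 (Finset.filter_subset (fun w => ¬ G.Adj v w) A)) ?_).symm.trans ?_
    · intro T hT hT'
      rw [Finset.mem_powerset] at hT hT'
      rw [if_neg]; rintro ⟨h1, h2⟩; exact hT' h2
    · apply Finset.sum_congr rfl
      intro T hT
      rw [Finset.mem_powerset] at hT
      by_cases h : ∀ u ∈ T, ∀ w ∈ T, ¬ G.Adj u w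
      · rw [if_pos h, if_pos ⟨h, hT⟩]
      · rw [if_neg h, if_neg (fun hh => h hh.1)]
  rw [h2]; unfold Xi; ring

lemma Xi_insert_le (hp : ∀ v, p v ∈ Set.Icc (0:ℝ) 1)
    (hint : ∀ W : Finset V, 0 < Xi G W p) {v : V} {A : Finset V} (hv : v ∉ A) :
    Xi G (insert v A) p ≤ Xi G A p := by
  rw [Xi_insert_s14 G p hv]
  have h1 : 0 ≤ 1 - p v := by have := (hp v).2; linarith
  have h2 := (hint (A.filter fun w => ¬ G.Adj v w)).le
  nlinarith

lemma Xi_union_le (hp : ∀ v, p v ∈ Set.Icc (0:ℝ) 1)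
    (hint : ∀ W : Finset V, 0 < Xi G W p) (B C : Finset V) :
    Xi G (B ∪ C) p ≤ Xi G B p := by
  classical
  induction C using Finset.induction_on with
  | empty => simp
  | @insert v C hv ih =>
    by_cases hvB : v ∈ B ∪ C
    · have : B ∪ insert v C = B ∪ C := by
        rw [Finset.union_insert, Finset.insert_eq_self.2 hvB]
      rw [this]; exact ih
    · have : B ∪ insert v C = insert v (B ∪ C) := by rw [Finset.union_insert]
      rw [this]
      exact le_trans (Xi_insert_le G p hp hint hvB) ih

lemma Xi_mono (hp : ∀ v, p v ∈ Set.Icc (0:ℝ) 1)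
    (hint : ∀ W : Finset V, 0 < Xi G W p) {B A : Finset V} (h : B ⊆ A) :
    Xi G A p ≤ Xi G B p := by
  have : A = B ∪ (A \ B) := by rw [Finset.union_sdiff_of_subset h]
  rw [this]; exact Xi_union_le G p hp hint B (A \ B)

lemma Xi_le_one (hp : ∀ v, p v ∈ Set.Icc (0:ℝ) 1)
    (hint : ∀ W : Finset V, 0 < Xi G W p) (A : Finset V) :
    Xi G A p ≤ 1 := by
  have := Xi_mono G p hp hint (Finset.empty_subset A)
  rwa [Xi_empty] at this

end AuxLemmas

section AuxLemmas2
variable {V : Type*}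


lemma measurableSet_cylEvt (S : Finset V) (s : V → Bool) : MeasurableSet (cylEvt S s) := by
  have h : cylEvt S s = ⋂ v ∈ (S : Set V), (fun ω : V → Bool => ω v) ⁻¹' {s v} := by
    ext ω; simp [cylEvt]
  rw [h]
  exact MeasurableSet.biInter S.countable_toSet
    (fun v _ => (measurable_pi_apply v) (measurableSet_singleton (s v)))

lemma measurableSet_coordTrue (v : V) : MeasurableSet {ω : V → Bool | ω v = true} := by
  have h : {ω : V → Bool | ω v = true} = (fun ω : V → Bool => ω v) ⁻¹' {true} := by
    ext ω; simp
  rw [h]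
  exact (measurable_pi_apply v) (measurableSet_singleton true)

lemma cylEvt_empty (s : V → Bool) : cylEvt (∅ : Finset V) s = Set.univ := by
  ext ω; simp [cylEvt]

lemma ones_key (G : SimpleGraph V) (p : V → ℝ)
    (hp : ∀ v, p v ∈ Set.Icc (0:ℝ) 1) (hint : ∀ W : Finset V, 0 < Xi G W p)
    (μ : Measure (V → Bool)) (hμ : WeakDep G p μ) :
    ∀ n : ℕ, ∀ A : Finset V, A.card ≤ n → ∀ B ⊆ A,
      Xi G A p * (μ (cylEvt B (fun _ => true))).toReal
        ≤ (μ (cylEvt A (fun _ => true))).toReal * Xi G B p := by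
  haveI : IsProbabilityMeasure μ := hμ.1
  have hmempty : (μ (cylEvt (∅ : Finset V) (fun _ => true))).toReal = 1 := by
    rw [cylEvt_empty, measure_univ, ENNReal.toReal_one]
  have hmnonneg : ∀ S : Finset V, 0 ≤ (μ (cylEvt S (fun _ => true))).toReal :=
    fun S => ENNReal.toReal_nonneg
  intro n
  induction n with
  | zero =>
    intro A hA B hB
    have hA0 : A = ∅ := Finset.card_eq_zero.1 (Nat.le_zero.1 hA)
    have hB0 : B = ∅ := Finset.subset_empty.1 (hA0 ▸ hB)
    rw [hA0, hB0, mul_comm]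
  | succ n ih =>
    intro A hA B hBA
    by_cases hBeq : B = A
    · rw [hBeq, mul_comm]
    · obtain ⟨v, hvA, hvB⟩ := Finset.exists_of_ssubset (lt_of_le_of_ne hBA hBeq)
      set A' := A.erase v with hA'
      set A1 := A'.filter (fun w => ¬ G.Adj v w) with hA1
      have hvA' : v ∉ A' := Finset.notMem_erase v A
      have hins : insert v A' = A := Finset.insert_erase hvA
      have hA'card : A'.card ≤ n := by
        rw [hA', Finset.card_erase_of_mem hvA]
        have : 1 ≤ A.card := Finset.card_pos.2 ⟨v, hvA⟩
        omega
      have hA1A' : A1 ⊆ A' := Finset.filter_subset _ _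
      have hA1card : A1.card ≤ n := le_trans (Finset.card_le_card hA1A') hA'card
      have honesb : ∀ C : Finset V, C.card ≤ n → Xi G C p ≤ (μ (cylEvt C (fun _ => true))).toReal := by
        intro C hC
        have := ih C hC ∅ (Finset.empty_subset C)
        rwa [hmempty, Xi_empty, mul_one, mul_one] at this
      have hmA1pos : 0 < (μ (cylEvt A1 (fun _ => true))).toReal := lt_of_lt_of_le (hint A1) (honesb A1 hA1card)
      have hmA'pos : 0 < (μ (cylEvt A' (fun _ => true))).toReal := lt_of_lt_of_le (hint A') (honesb A' hA'card)
      -- weak dependency at v with S = A1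
      have hSgood : ∀ w ∈ A1, w ≠ v ∧ ¬ G.Adj v w := by
        intro w hw
        rw [hA1, Finset.mem_filter] at hw
        exact ⟨Finset.ne_of_mem_erase hw.1, hw.2⟩
      have hwd := hμ.2 v A1 hSgood (fun _ => true) hmA1pos
      have htrue : p v * (μ (cylEvt A1 (fun _ => true))).toReal ≤ (μ ({ω | ω v = true} ∩ cylEvt A1 (fun _ => true))).toReal := by
        rw [← le_div_iff₀ hmA1pos] at *
        exact hwd
      -- measure decompositions
      set Tv : Set (V → Bool) := {ω | ω v = true} with hTv
      have e1 : cylEvt A' (fun _ => true) ∩ Tv = cylEvt A (fun _ => true) := by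
        ext ω
        simp only [cylEvt, Set.mem_inter_iff, Set.mem_setOf_eq, ← hins, Finset.mem_insert]
        constructor
        · rintro ⟨h1, h2⟩ w (rfl | hw)
          · exact h2
          · exact h1 w hw
        · intro h
          exact ⟨fun w hw => h w (Or.inr hw), h v (Or.inl rfl)⟩
      have d1 : (μ (cylEvt A (fun _ => true))).toReal + (μ (cylEvt A' (fun _ => true) \ Tv)).toReal = (μ (cylEvt A' (fun _ => true))).toReal := by
        have := measure_inter_add_diff (μ := μ) (cylEvt A' (fun _ => true)) (measurableSet_coordTrue v)
        rw [e1] at this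
        have h2 := congrArg ENNReal.toReal this
        rwa [ENNReal.toReal_add (measure_ne_top μ _) (measure_ne_top μ _)] at h2
      have d2 : (μ (cylEvt A1 (fun _ => true) ∩ Tv)).toReal
          + (μ (cylEvt A1 (fun _ => true) \ Tv)).toReal = (μ (cylEvt A1 (fun _ => true))).toReal := by
        have := measure_inter_add_diff (μ := μ) (cylEvt A1 (fun _ => true)) (measurableSet_coordTrue v)
        have h2 := congrArg ENNReal.toReal this
        rwa [ENNReal.toReal_add (measure_ne_top μ _) (measure_ne_top μ _)] at h2
      have hincl : (μ (cylEvt A' (fun _ => true) \ Tv)).toReal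
          ≤ (μ (cylEvt A1 (fun _ => true) \ Tv)).toReal := by
        apply ENNReal.toReal_le_toReal (measure_ne_top μ _) (measure_ne_top μ _) |>.2
        apply measure_mono
        apply Set.diff_subset_diff_left
        intro ω hω w hw
        exact hω w (hA1A' hw)
      have htrue' : (μ (cylEvt A1 (fun _ => true) ∩ Tv)).toReal
          = (μ (Tv ∩ cylEvt A1 (fun _ => true))).toReal := by rw [Set.inter_comm]
      have hzero : (μ (cylEvt A1 (fun _ => true) \ Tv)).toReal ≤ (1 - p v) * (μ (cylEvt A1 (fun _ => true))).toReal := by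
        rw [htrue'] at d2
        nlinarith [htrue]
      have hlower : (μ (cylEvt A' (fun _ => true))).toReal - (1 - p v) * (μ (cylEvt A1 (fun _ => true))).toReal ≤ (μ (cylEvt A (fun _ => true))).toReal := by
        nlinarith [hincl, hzero, d1]
      -- induction hypotheses
      have ihr : Xi G A' p * (μ (cylEvt A1 (fun _ => true))).toReal ≤ (μ (cylEvt A' (fun _ => true))).toReal * Xi G A1 p := ih A' hA'card A1 hA1A'
      have hBsub : B ⊆ A' := Finset.subset_erase.2 ⟨hBA, hvB⟩
      have ihB : Xi G A' p * (μ (cylEvt B (fun _ => true))).toReal ≤ (μ (cylEvt A' (fun _ => true))).toReal * Xi G B p := ih A' hA'card B hBsub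
      have fund : Xi G A p = Xi G A' p - (1 - p v) * Xi G A1 p := by
        rw [← hins, Xi_insert_s14 G p hvA']
      have hXiA'pos : 0 < Xi G A' p := hint A'
      have hXiA1pos : 0 < Xi G A1 p := hint A1
      have hXiBpos : 0 < Xi G B p := hint B
      have hqv : 0 ≤ 1 - p v := by have := (hp v).2; linarith
      have step : Xi G A p * (μ (cylEvt A' (fun _ => true))).toReal ≤ (μ (cylEvt A (fun _ => true))).toReal * Xi G A' p := by
        have h1 : ((μ (cylEvt A' (fun _ => true))).toReal - (1 - p v) * (μ (cylEvt A1 (fun _ => true))).toReal) * Xi G A' p ≤ (μ (cylEvt A (fun _ => true))).toReal * Xi G A' p :=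
          mul_le_mul_of_nonneg_right hlower hXiA'pos.le
        have h2 : (1 - p v) * (Xi G A' p * (μ (cylEvt A1 (fun _ => true))).toReal) ≤ (1 - p v) * ((μ (cylEvt A' (fun _ => true))).toReal * Xi G A1 p) :=
          mul_le_mul_of_nonneg_left ihr hqv
        rw [fund]
        nlinarith [h1, h2]
      have final : Xi G A p * (μ (cylEvt B (fun _ => true))).toReal * (μ (cylEvt A' (fun _ => true))).toReal ≤ (μ (cylEvt A (fun _ => true))).toReal * Xi G B p * (μ (cylEvt A' (fun _ => true))).toReal := by
        have h3 : Xi G A p * (μ (cylEvt A' (fun _ => true))).toReal * (μ (cylEvt B (fun _ => true))).toReal ≤ (μ (cylEvt A (fun _ => true))).toReal * Xi G A' p * (μ (cylEvt B (fun _ => true))).toReal :=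
          mul_le_mul_of_nonneg_right step (hmnonneg B)
        have h4 : (μ (cylEvt A (fun _ => true))).toReal * (Xi G A' p * (μ (cylEvt B (fun _ => true))).toReal) ≤ (μ (cylEvt A (fun _ => true))).toReal * ((μ (cylEvt A' (fun _ => true))).toReal * Xi G B p) :=
          mul_le_mul_of_nonneg_left ihB (hmnonneg A)
        nlinarith [h3, h4]
      exact le_of_mul_le_mul_right final hmA'pos


lemma ones_bound (G : SimpleGraph V) (p : V → ℝ)
    (hp : ∀ v, p v ∈ Set.Icc (0:ℝ) 1) (hint : ∀ W : Finset V, 0 < Xi G W p)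
    (μ : Measure (V → Bool)) (hμ : WeakDep G p μ) (A : Finset V) :
    Xi G A p ≤ (μ (cylEvt A (fun _ => true))).toReal := by
  haveI : IsProbabilityMeasure μ := hμ.1
  have h := ones_key G p hp hint μ hμ A.card A le_rfl ∅ (Finset.empty_subset A)
  rw [cylEvt_empty, measure_univ, ENNReal.toReal_one, Xi_empty, mul_one, mul_one] at h
  exact h

lemma prodExp_le_aux (W : Finset V) (f : (W → Bool) → ℝ) (hf : Monotone f)
    (c : ℝ) (h0 : 0 ≤ c) (h1 : c ≤ 1) :
    prodExp (fun _ => c) W f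
      ≤ (1-c)^W.card * f (fun _ => false) + (1 - (1-c)^W.card) * f (fun _ => true) := by
  classical
  set w : (↥W → Bool) → ℝ := fun s => ∏ v : W, if s v then c else 1 - c with hwdef
  have hsum : ∑ s : W → Bool, w s = 1 := by
    have h := Finset.prod_univ_sum (fun _ : W => (Finset.univ : Finset Bool))
      (fun _ b => if b then c else 1 - c)
    rw [Fintype.piFinset_univ] at h
    have hl : (∏ _v : W, ∑ b ∈ (Finset.univ : Finset Bool), if b then c else 1 - c) = 1 := by
      have : (∑ b ∈ (Finset.univ : Finset Bool), if b then c else 1 - c) = 1 := by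
        rw [Fintype.sum_bool]; simp
      rw [this, Finset.prod_const_one]
    rw [hl] at h
    exact h.symm
  have hw0 : ∀ s, 0 ≤ w s := by
    intro s
    apply Finset.prod_nonneg
    intro v _
    by_cases h : s v <;> simp [h] <;> linarith
  have hwbot : w (fun _ => false) = (1-c)^W.card := by
    rw [hwdef]
    simp only [Bool.false_eq_true, if_false]
    rw [Finset.prod_const, Finset.card_univ, Fintype.card_coe]
  have hsplit : w (fun _ => false) * f (fun _ => false)
      + ∑ s ∈ Finset.univ.erase (fun _ => false), w s * f s
      = prodExp (fun _ => c) W f := by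
    rw [prodExp]
    exact Finset.add_sum_erase _ (fun s => w s * f s) (Finset.mem_univ _)
  have hsum' : w (fun _ => false) + ∑ s ∈ Finset.univ.erase (fun _ => false), w s = 1 := by
    rw [Finset.add_sum_erase _ w (Finset.mem_univ _)]
    exact hsum
  have hb : ∑ s ∈ Finset.univ.erase (fun _ => false), w s * f s
      ≤ ∑ s ∈ Finset.univ.erase (fun _ => false), w s * f (fun _ => true) := by
    apply Finset.sum_le_sum
    intro s _
    exact mul_le_mul_of_nonneg_left (hf (fun v => Bool.le_true (s v))) (hw0 s)
  rw [← hsplit]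
  have : ∑ s ∈ Finset.univ.erase (fun _ => false), w s * f (fun _ => true)
      = (1 - (1-c)^W.card) * f (fun _ => true) := by
    rw [← Finset.sum_mul]
    congr 1
    rw [← hwbot]
    linarith [hsum']
  rw [hwbot] at *
  linarith [hb, this.le, this.ge]


end AuxLemmas2

/-- on a finite graph, inside the interior Shearer set every BRF
in the weak dependency class dominates the homogeneous product field with
parameter c = 1 - (1 - Ξ_G(p))^(1/|V|) > 0. -/
theorem stmt14 {V : Type*} [Fintype V] [Nonempty V] (G : SimpleGraph V)
    (p : V → ℝ) (hp : ∀ v, p v ∈ Set.Icc (0:ℝ) 1)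
    (hint : ∀ W : Finset V, 0 < Xi G W p) :
    0 < 1 - (1 - Xi G Finset.univ p) ^ ((Fintype.card V : ℝ)⁻¹) ∧
    ∀ μ : Measure (V → Bool), WeakDep G p μ →
      DomProd μ (fun _ => 1 - (1 - Xi G Finset.univ p) ^ ((Fintype.card V : ℝ)⁻¹)) := by
  classical
  have hΞpos : 0 < Xi G Finset.univ p := hint _
  have hΞle1 : Xi G Finset.univ p ≤ 1 := Xi_le_one G p hp hint _
  set Ξ := Xi G Finset.univ p with hΞ
  set n := Fintype.card V with hn
  have hnpos : 0 < n := Fintype.card_pos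
  set d : ℝ := (1 - Ξ) ^ ((n : ℝ)⁻¹) with hd
  have h1Ξ0 : 0 ≤ 1 - Ξ := by linarith
  have hd0 : 0 ≤ d := Real.rpow_nonneg h1Ξ0 _
  have hd1 : d ≤ 1 := Real.rpow_le_one h1Ξ0 (by linarith) (by positivity)
  have hdlt1 : d < 1 := Real.rpow_lt_one h1Ξ0 (by linarith) (by positivity)
  have hdn : d ^ n = 1 - Ξ := by
    rw [hd, ← Real.rpow_natCast ((1-Ξ) ^ ((n:ℝ)⁻¹)) n, ← Real.rpow_mul h1Ξ0,
      inv_mul_cancel₀ (by exact_mod_cast hnpos.ne'), Real.rpow_one]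
  constructor
  · linarith
  intro μ hμ W f hf
  haveI : IsProbabilityMeasure μ := hμ.1
  set k := W.card with hk
  set E : Set (V → Bool) := cylEvt W (fun _ => true) with hE
  have hμE : 1 - d ^ k ≤ (μ E).toReal := by
    have h1 : Xi G W p ≤ (μ E).toReal := ones_bound G p hp hint μ hμ W
    have h2 : Ξ ≤ Xi G W p := Xi_mono G p hp hint (Finset.subset_univ W)
    have h3 : d ^ n ≤ d ^ k := pow_le_pow_of_le_one hd0 hd1 (Finset.card_le_univ W)
    linarith [hdn]
  set fb := f (fun _ => false) with hfb
  set ft := f (fun _ => true) with hft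
  have hfbft : fb ≤ ft := hf (fun v => Bool.false_le _)
  -- π side
  have hπ : prodExp (fun _ => 1 - d) W f ≤ d ^ k * fb + (1 - d ^ k) * ft := by
    have := prodExp_le_aux W f hf (1 - d) (by linarith) (by linarith)
    rwa [sub_sub_cancel] at this
  -- Y side
  set g : (V → Bool) → ℝ := fun ω => fb + E.indicator (fun _ => ft - fb) ω with hg
  have hgle : g ≤ fun ω => f (fun v => ω v.1) := by
    intro ω
    by_cases hω : ω ∈ E
    · have hproj : (fun v : W => ω v.1) = (fun _ => true) := by
        funext v
        exact hω v.1 v.2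
      simp only [hg, Set.indicator_of_mem hω, hproj]
      linarith
    · simp only [hg, Set.indicator_of_notMem hω, add_zero]
      exact hf (fun v => Bool.false_le _)
  have hmf : Measurable fun ω : V → Bool => f (fun v => ω v.1) := by
    have hproj : Measurable (fun ω : V → Bool => (fun v : W => ω v.1)) :=
      measurable_pi_lambda _ (fun v => measurable_pi_apply v.1)
    exact (measurable_of_countable f).comp hproj
  have hintf : Integrable (fun ω : V → Bool => f (fun v => ω v.1)) μ := by
    set C := ∑ s : W → Bool, |f s| with hC
    refine Integrable.mono' (integrable_const C) hmf.aestronglyMeasurable ?_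
    refine Filter.Eventually.of_forall (fun ω => ?_)
    rw [Real.norm_eq_abs]
    exact Finset.single_le_sum (fun s _ => abs_nonneg (f s)) (Finset.mem_univ _)
  have hintg : Integrable g μ := by
    apply Integrable.add (integrable_const fb)
    exact (integrable_const (ft - fb)).indicator (measurableSet_cylEvt W _)
  have hig : ∫ ω, g ω ∂μ = fb + (μ E).toReal * (ft - fb) := by
    rw [hg]
    rw [integral_add (integrable_const fb)
      ((integrable_const (ft - fb)).indicator (measurableSet_cylEvt W _))]
    rw [integral_const, integral_indicator_const _ (measurableSet_cylEvt W _)]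
    simp [measure_univ]
    exact Or.inl rfl
  have hY : fb + (μ E).toReal * (ft - fb) ≤ ∫ ω, f (fun v => ω v.1) ∂μ := by
    rw [← hig]
    exact integral_mono hintg hintf hgle
  have hmid : d ^ k * fb + (1 - d ^ k) * ft ≤ fb + (μ E).toReal * (ft - fb) := by
    nlinarith [mul_le_mul_of_nonneg_right hμE (by linarith : (0:ℝ) ≤ ft - fb)]
  calc prodExp (fun _ => 1 - d) W f ≤ d ^ k * fb + (1 - d ^ k) * ft := hπ
    _ ≤ fb + (μ E).toReal * (ft - fb) := hmid
    _ ≤ ∫ ω, f (fun v => ω v.1) ∂μ := hY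
end
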